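/- arXiv:1408.0858 — 2 statements merged into one kernel-verified Lean document; each statement's English description precedes it below -/
import Mathlib

section
/- If Δ is a simplicial complex with n vertices and at most μ facets, then the i-th reduced simplicial homology of Δ with coefficients in a field k vanishes for all i ≥ μ − 1. -/
open Finset

/-- An abstract simplicial complex on vertex type `V` (faces are finsets,
closed under taking subsets; the empty face is allowed). -/
structure SComplex (V : Type) where
  faces : Set (Finset V)
  down_closed : ∀ ⦃s t : Finset V⦄, s ∈ faces → t ⊆ s → t ∈ faces

namespace SComplex

variable {V : Type} [LinearOrder V]

/-- The faces of reduced dimension `i`, i.e. of cardinality `i + 1`. -/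
def czFaces (K : SComplex V) (i : ℤ) : Type :=
  {s : Finset V // s ∈ K.faces ∧ (s.card : ℤ) = i + 1}

/-- Simplicial chains of reduced degree `i` with coefficients in `M`. -/
abbrev chains (K : SComplex V) (M : Type) [AddCommGroup M] (i : ℤ) : Type :=
  K.czFaces i →₀ M

/-- The simplicial boundary map (for reduced homology, so the empty face is used). -/
noncomputable def bdry (K : SComplex V) (M : Type) [AddCommGroup M] (i : ℤ) :
    K.chains M i →ₗ[ℤ] K.chains M (i - 1) :=
  Finsupp.lsum ℤ fun s =>
    ∑ a ∈ s.1.attach,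
      ((-1 : ℤ) ^ ((s.1.sort (· ≤ ·)).idxOf a.1)) •
        (Finsupp.lsingle
          (⟨s.1.erase a.1, K.down_closed s.2.1 (Finset.erase_subset a.1 s.1), by
              have h1 : a.1 ∈ s.1 := a.2
              have h2 := s.2.2
              have h3 : 1 ≤ s.1.card := Finset.card_pos.mpr ⟨a.1, h1⟩
              rw [Finset.card_erase_of_mem h1, Nat.cast_sub h3, h2]
              ring⟩ : K.czFaces (i - 1)) : M →ₗ[ℤ] K.chains M (i - 1))

/-- Transport of chains along an equality of degrees. -/
noncomputable def chainsCongr (K : SComplex V) (M : Type) [AddCommGroup M] {i j : ℤ}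
    (h : i = j) : K.chains M i ≃ₗ[ℤ] K.chains M j := by
  subst h; exact LinearEquiv.refl ℤ _

/-- Reduced simplicial homology of `K` in degree `i` with coefficients in `M`. -/
noncomputable abbrev redHomology (K : SComplex V) (M : Type) [AddCommGroup M] (i : ℤ) : Type :=
  LinearMap.ker (K.bdry M i) ⧸
    Submodule.comap (LinearMap.ker (K.bdry M i)).subtype
      (Submodule.map (K.chainsCongr M (show i + 1 - 1 = i by ring)).toLinearMap
        (LinearMap.range (K.bdry M (i + 1))))

/-- The boundary map for unreduced homology: it is the usual boundary map in positive
degrees and `0` from degree `0` (so that the empty face does not contribute). -/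
noncomputable def ubdry (K : SComplex V) (M : Type) [AddCommGroup M] (i : ℤ) :
    K.chains M i →ₗ[ℤ] K.chains M (i - 1) :=
  if 0 < i then K.bdry M i else 0

/-- Unreduced (ordinary) simplicial homology. -/
noncomputable abbrev homology (K : SComplex V) (M : Type) [AddCommGroup M] (i : ℤ) : Type :=
  LinearMap.ker (K.ubdry M i) ⧸
    Submodule.comap (LinearMap.ker (K.ubdry M i)).subtype
      (Submodule.map (K.chainsCongr M (show i + 1 - 1 = i by ring)).toLinearMap
        (LinearMap.range (K.ubdry M (i + 1))))

end SComplex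

/-- The facets (maximal faces) of a simplicial complex. -/
def SComplex.facets {V : Type} (K : SComplex V) : Set (Finset V) :=
  {s | s ∈ K.faces ∧ ∀ t ∈ K.faces, s ⊆ t → s = t}

/-- The geometric realization of a simplicial complex on a finite vertex set. -/
abbrev SComplex.realization {V : Type} [DecidableEq V] [Fintype V] (K : SComplex V) : Type :=
  {f : V → ℝ // (∀ v, 0 ≤ f v) ∧ (∑ v, f v = 1) ∧
    (Finset.univ.filter (fun v => f v ≠ 0)) ∈ K.faces}

/-- The nerve of a finite family of finsets (e.g. the facets of a complex). -/
def nerveF {V : Type} {t : ℕ} (Fs : Fin t → Finset V) : SComplex (Fin t) where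
  faces := {S | S = ∅ ∨ ∃ w, ∀ i ∈ S, w ∈ Fs i}
  down_closed := by
    rintro s u hs hu
    rcases hs with h | ⟨w, hw⟩
    · left; subst h; exact Finset.subset_empty.mp hu
    · right; exact ⟨w, fun i hi => hw i (hu hi)⟩

/-- The nerve of a finite family of subcomplexes. -/
def nerveC {V : Type} {t : ℕ} (Ks : Fin t → SComplex V) : SComplex (Fin t) where
  faces := {S | S = ∅ ∨ ∃ F : Finset V, F.Nonempty ∧ ∀ i ∈ S, F ∈ (Ks i).faces}
  down_closed := by
    rintro s u hs hu
    rcases hs with h | ⟨F, hF, hw⟩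
    · left; subst h; exact Finset.subset_empty.mp hu
    · right; exact ⟨F, hF, fun i hi => hw i (hu hi)⟩

/-- The intersection of a family of subcomplexes indexed by a finset. -/
def interComplex {V : Type} {t : ℕ} (Ks : Fin t → SComplex V) (S : Finset (Fin t)) :
    SComplex V where
  faces := {F | ∀ i ∈ S, F ∈ (Ks i).faces}
  down_closed := fun _ _ hs hu i hi => (Ks i).down_closed (hs i hi) hu

/-- The full simplex on `Fin n`. -/
def fullSC (n : ℕ) : SComplex (Fin n) where
  faces := Set.univ
  down_closed := fun _ _ _ _ => trivial

/-- The dimension of a simplicial complex (`-1` for the empty complex, junk if empty). -/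
noncomputable def SComplex.dim {V : Type} (K : SComplex V) : ℤ :=
  sSup ((fun s : Finset V => (s.card : ℤ) - 1) '' K.faces)


-- ===================== auxiliary development =====================

section AuxList

variable {V : Type} [LinearOrder V]

theorem aux_sort_erase (s : Finset V) (a : V) :
    (s.erase a).sort (· ≤ ·) = (s.sort (· ≤ ·)).erase a := by
  refine (fun h1 h2 h3 => List.Perm.eq_of_pairwise' (r := (· ≤ ·)) h2 h3 h1) ?_ ?_ ?_
  · rw [← Multiset.coe_eq_coe, ← Multiset.coe_erase, Finset.sort_eq, Finset.sort_eq]; rfl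
  · exact Finset.pairwise_sort _ _
  · exact (Finset.pairwise_sort _ _).erase _

theorem aux_indexOf_erase {l : List V} (hl : l.Nodup) {a b : V} (ha : a ∈ l) (hb : b ∈ l)
    (hab : b ≠ a) :
    (l.erase a).idxOf b =
      if l.idxOf b < l.idxOf a then l.idxOf b else l.idxOf b - 1 := by
  induction l with
  | nil => simp at ha
  | cons c l ih =>
    rcases List.nodup_cons.mp hl with ⟨hcl, hl'⟩
    by_cases hca : c = a
    · subst hca
      have hbl : b ∈ l := by
        rcases List.mem_cons.mp hb with h | h
        · exact absurd h hab
        · exact h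
      rw [List.erase_cons_head, List.idxOf_cons_ne _ (fun h => hab h.symm),
        List.idxOf_cons_self]
      simp
    · have hal : a ∈ l := by
        rcases List.mem_cons.mp ha with h | h
        · exact absurd h.symm hca
        · exact h
      rw [List.erase_cons_tail (a := a) (b := c) (by simpa using hca)]
      by_cases hbc : b = c
      · subst hbc
        rw [List.idxOf_cons_self, List.idxOf_cons_self,
          List.idxOf_cons_ne _ hca]
        simp
      · have hbl : b ∈ l := by
          rcases List.mem_cons.mp hb with h | h
          · exact absurd h hbc
          · exact h
        rw [List.idxOf_cons_ne _ (fun h => hbc h.symm),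
          List.idxOf_cons_ne _ (fun h => hbc h.symm),
          List.idxOf_cons_ne _ hca, ih hl' hal hbl]
        have hne : l.idxOf b ≠ l.idxOf a := by
          intro h
          exact hab ((List.idxOf_inj hbl).mp h)
        by_cases hlt : l.idxOf b < l.idxOf a
        · rw [if_pos hlt, if_pos (by omega)]
        · rw [if_neg hlt, if_neg (by omega)]
          omega

/-- The sign of a vertex in a face. -/
noncomputable def sgn (s : Finset V) (a : V) : ℤ := (-1 : ℤ) ^ ((s.sort (· ≤ ·)).idxOf a)

theorem sgn_antisymm {s : Finset V} {a b : V} (ha : a ∈ s) (hb : b ∈ s) (hab : a ≠ b) :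
    sgn s a * sgn (s.erase a) b = -(sgn s b * sgn (s.erase b) a) := by
  set L := s.sort (· ≤ ·) with hL
  have hnd : L.Nodup := Finset.sort_nodup _ _
  have haL : a ∈ L := (Finset.mem_sort _).mpr ha
  have hbL : b ∈ L := (Finset.mem_sort _).mpr hb
  have hia : L.idxOf a ≠ L.idxOf b := fun h => hab ((List.idxOf_inj haL).mp h)
  unfold sgn
  rw [aux_sort_erase, aux_sort_erase, ← hL,
    aux_indexOf_erase hnd haL hbL (Ne.symm hab), aux_indexOf_erase hnd hbL haL hab]
  set ia := L.idxOf a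
  set ib := L.idxOf b
  rcases lt_or_gt_of_ne hia with h | h
  · rw [if_neg (by omega), if_pos h]
    obtain ⟨j, hj⟩ : ∃ j, ib = j + 1 := ⟨ib - 1, by omega⟩
    rw [hj]
    have : j + 1 - 1 = j := by omega
    rw [this, pow_succ]
    ring
  · rw [if_pos h, if_neg (by omega)]
    obtain ⟨j, hj⟩ : ∃ j, ia = j + 1 := ⟨ia - 1, by omega⟩
    rw [hj]
    have : j + 1 - 1 = j := by omega
    rw [this, pow_succ]
    ring

variable (M : Type) [AddCommGroup M]

/-- The ambient boundary operator on chains indexed by all finsets. -/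
noncomputable def DD : (Finset V →₀ M) →ₗ[ℤ] (Finset V →₀ M) :=
  Finsupp.lsum ℤ fun s =>
    ∑ a ∈ s.attach, sgn s a.1 • (Finsupp.lsingle (s.erase a.1) : M →ₗ[ℤ] (Finset V →₀ M))

theorem DD_single (s : Finset V) (m : M) :
    DD M (Finsupp.single s m) = ∑ a ∈ s, sgn s a • Finsupp.single (s.erase a) m := by
  rw [DD, Finsupp.lsum_single,
    ← Finset.sum_attach s (fun a => sgn s a • Finsupp.single (s.erase a) m)]
  simp [Finsupp.lsingle]

theorem aux_erase_comm (s : Finset V) (a b : V) : (s.erase a).erase b = (s.erase b).erase a := by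
  ext x; simp; tauto

theorem DD_DD_single (s : Finset V) (m : M) : DD M (DD M (Finsupp.single s m)) = 0 := by
  rw [DD_single, map_sum]
  have : ∀ a ∈ s, DD M (sgn s a • Finsupp.single (s.erase a) m) =
      ∑ b ∈ s.erase a, (sgn s a * sgn (s.erase a) b) •
        Finsupp.single ((s.erase a).erase b) m := by
    intro a _
    rw [map_smul, DD_single, Finset.smul_sum]
    simp [smul_smul]
  rw [Finset.sum_congr rfl this]
  have hconv : ∑ a ∈ s, ∑ b ∈ s.erase a,
      (sgn s a * sgn (s.erase a) b) • Finsupp.single ((s.erase a).erase b) m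
      = ∑ p ∈ s.offDiag,
      (sgn s p.1 * sgn (s.erase p.1) p.2) • Finsupp.single ((s.erase p.1).erase p.2) m := by
    rw [show s.offDiag = (s ×ˢ s).filter (fun p => p.1 ≠ p.2) by ext; simp [Finset.mem_offDiag, and_assoc],
      Finset.sum_filter, Finset.sum_product]
    apply Finset.sum_congr rfl
    intro a _
    rw [← Finset.sum_filter, Finset.filter_ne]
  rw [hconv]
  apply Finset.sum_involution (fun p _ => Prod.swap p)
  · intro p hp
    rcases Finset.mem_offDiag.mp hp with ⟨h1, h2, h3⟩
    have := sgn_antisymm h1 h2 h3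
    simp only [Prod.swap]
    rw [aux_erase_comm s p.1 p.2, this, ← add_smul]
    simp
  · intro p hp h
    rcases Finset.mem_offDiag.mp hp with ⟨h1, h2, h3⟩
    intro hs
    exact h3 ((congrArg Prod.fst hs).symm)
  · intro p hp
    rcases Finset.mem_offDiag.mp hp with ⟨h1, h2, h3⟩
    exact Finset.mem_offDiag.mpr ⟨h2, h1, Ne.symm h3⟩
  · intro p _
    rfl

theorem DD_DD (c : Finset V →₀ M) : DD M (DD M c) = 0 := by
  have : (DD M (V := V)).comp (DD M) = 0 := by
    apply Finsupp.lhom_ext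
    intro s m
    simpa using DD_DD_single M s m
  simpa using LinearMap.congr_fun this c

theorem support_DD (c : Finset V →₀ M) :
    ∀ t ∈ (DD M c).support, ∃ s ∈ c.support, ∃ x ∈ s, t = s.erase x := by
  intro t ht
  classical
  rw [← Finsupp.sum_single c, Finsupp.sum, map_sum] at ht
  obtain ⟨s, hs, ht⟩ := Finset.mem_biUnion.mp (Finsupp.support_finset_sum ht)
  rw [DD_single] at ht
  obtain ⟨x, hx, ht⟩ := Finset.mem_biUnion.mp (Finsupp.support_finset_sum ht)
  have : (sgn s x • Finsupp.single (s.erase x) (c s) : Finset V →₀ M).support ⊆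
      {s.erase x} :=
    (Finsupp.support_smul).trans Finsupp.support_single_subset
  exact ⟨s, hs, x, hx, Finset.mem_singleton.mp (this ht)⟩

/-- The cone operator with apex `v`. -/
noncomputable def cone (v : V) : (Finset V →₀ M) →ₗ[ℤ] (Finset V →₀ M) :=
  Finsupp.lsum ℤ fun s =>
    if v ∈ s then 0 else (Finsupp.lsingle (insert v s) : M →ₗ[ℤ] (Finset V →₀ M))

theorem cone_single_mem (v : V) (s : Finset V) (m : M) (h : v ∈ s) :
    cone M v (Finsupp.single s m) = 0 := by
  rw [cone, Finsupp.lsum_single, if_pos h]; rfl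

theorem cone_single_not_mem (v : V) (s : Finset V) (m : M) (h : v ∉ s) :
    cone M v (Finsupp.single s m) = Finsupp.single (insert v s) m := by
  rw [cone, Finsupp.lsum_single, if_neg h]; rfl

theorem support_cone (v : V) (c : Finset V →₀ M) :
    ∀ t ∈ (cone M v c).support, ∃ s ∈ c.support, v ∉ s ∧ t = insert v s := by
  intro t ht
  classical
  rw [← Finsupp.sum_single c, Finsupp.sum, map_sum] at ht
  obtain ⟨s, hs, ht⟩ := Finset.mem_biUnion.mp (Finsupp.support_finset_sum ht)
  by_cases h : v ∈ s
  · rw [cone_single_mem M v s _ h] at ht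
    simp at ht
  · rw [cone_single_not_mem M v s _ h] at ht
    exact ⟨s, hs, h, Finset.mem_singleton.mp (Finsupp.support_single_subset ht)⟩

theorem aux_sort_insert_min {v : V} {s : Finset V} (hv : ∀ x ∈ s, v ≤ x) (hvs : v ∉ s) :
    (insert v s).sort (· ≤ ·) = v :: s.sort (· ≤ ·) :=
  Finset.sort_insert _ (by simpa using hv) hvs

theorem sgn_insert_self {v : V} {s : Finset V} (hv : ∀ x ∈ s, v ≤ x) (hvs : v ∉ s) :
    sgn (insert v s) v = 1 := by
  rw [sgn, aux_sort_insert_min hv hvs, List.idxOf_cons_self, pow_zero]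

theorem sgn_insert_of_mem {v : V} {s : Finset V} (hv : ∀ x ∈ s, v ≤ x) (hvs : v ∉ s)
    {a : V} (ha : a ∈ s) : sgn (insert v s) a = -sgn s a := by
  have hav : v ≠ a := fun h => hvs (h ▸ ha)
  rw [sgn, sgn, aux_sort_insert_min hv hvs, List.idxOf_cons_ne _ hav, pow_succ]
  ring

theorem sgn_min_mem {v : V} {s : Finset V} (hv : ∀ x ∈ s, v ≤ x) (hvs : v ∈ s) :
    sgn s v = 1 := by
  have h1 : s = insert v (s.erase v) := (Finset.insert_erase hvs).symm
  rw [sgn, h1, aux_sort_insert_min (fun x hx => hv x (Finset.mem_of_mem_erase hx))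
    (Finset.notMem_erase v s), List.idxOf_cons_self, pow_zero]

theorem cone_homotopy_single {v : V} {s : Finset V} (hv : ∀ x ∈ s, v ≤ x) (m : M) :
    DD M (cone M v (Finsupp.single s m)) + cone M v (DD M (Finsupp.single s m))
      = Finsupp.single s m := by
  by_cases hvs : v ∈ s
  · rw [cone_single_mem M v s m hvs, map_zero, zero_add, DD_single, map_sum]
    rw [Finset.sum_eq_single v]
    · rw [map_smul, cone_single_not_mem M v _ m (Finset.notMem_erase v s),
        Finset.insert_erase hvs, sgn_min_mem hv hvs, one_smul]
    · intro a ha hav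
      rw [map_smul, cone_single_mem M v _ m (Finset.mem_erase.mpr ⟨Ne.symm hav, hvs⟩),
        smul_zero]
    · intro h; exact absurd hvs h
  · rw [cone_single_not_mem M v s m hvs, DD_single, Finset.sum_insert hvs,
      Finset.erase_insert hvs, sgn_insert_self hv hvs, one_smul, DD_single, map_sum]
    have h1 : ∀ a ∈ s, sgn (insert v s) a • Finsupp.single ((insert v s).erase a) m
        = -(sgn s a • Finsupp.single (insert v (s.erase a)) m) := by
      intro a ha
      have hva : v ≠ a := fun h => hvs (h ▸ ha)
      rw [Finset.erase_insert_of_ne hva, sgn_insert_of_mem hv hvs ha, neg_smul]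
    have h2 : ∀ a ∈ s, cone M v (sgn s a • Finsupp.single (s.erase a) m)
        = sgn s a • Finsupp.single (insert v (s.erase a)) m := by
      intro a ha
      rw [map_smul, cone_single_not_mem M v _ m (fun h => hvs (Finset.mem_of_mem_erase h))]
    rw [Finset.sum_congr rfl h1, Finset.sum_congr rfl h2, Finset.sum_neg_distrib]
    abel

theorem cone_homotopy {v : V} (c : Finset V →₀ M)
    (hc : ∀ s ∈ c.support, ∀ x ∈ s, v ≤ x) :
    DD M (cone M v c) + cone M v (DD M c) = c := by
  conv_rhs => rw [← Finsupp.sum_single c]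
  rw [Finsupp.sum]
  conv_lhs => rw [← Finsupp.sum_single c, Finsupp.sum, map_sum, map_sum, map_sum, map_sum,
    ← Finset.sum_add_distrib]
  exact Finset.sum_congr rfl fun s hs => cone_homotopy_single M (hc s hs) (c s)

theorem main_lemma (n : ℕ) : ∀ (G : Finset (Finset V)), G.card ≤ n → ∀ d : ℕ, G.card ≤ d →
    ∀ c : Finset V →₀ M, DD M c = 0 → (∀ s ∈ c.support, s.card = d ∧ ∃ F ∈ G, s ⊆ F) →
    ∃ e : Finset V →₀ M, DD M e = c ∧ ∀ s ∈ e.support, s.card = d + 1 ∧ ∃ F ∈ G, s ⊆ F := by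
  classical
  induction n with
  | zero =>
    intro G hG d _ c _ hs
    have hc0 : c = 0 := by
      rw [← Finsupp.support_eq_empty]
      by_contra h
      obtain ⟨s, hsmem⟩ := Finset.nonempty_iff_ne_empty.mpr h
      obtain ⟨_, F, hF, _⟩ := hs s hsmem
      rw [Finset.card_eq_zero.mp (Nat.le_zero.mp hG)] at hF
      simp at hF
    exact ⟨0, by simp [hc0], by simp⟩
  | succ n ih =>
    intro G hG d hGd c hc hs
    rcases Finset.eq_empty_or_nonempty G with hGe | ⟨F, hF⟩
    · have hc0 : c = 0 := by
        rw [← Finsupp.support_eq_empty]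
        by_contra h
        obtain ⟨s, hsmem⟩ := Finset.nonempty_iff_ne_empty.mpr h
        obtain ⟨_, F, hF, _⟩ := hs s hsmem
        simp [hGe] at hF
      exact ⟨0, by simp [hc0], by simp⟩
    · -- split c into the part in the simplex F and the rest
      set a := c.filter (fun s => s ⊆ F) with ha
      set b := c.filter (fun s => ¬ s ⊆ F) with hb
      have hab : a + b = c := Finsupp.filter_pos_add_filter_neg c _
      have hd1 : 1 ≤ d := le_trans (Finset.card_pos.mpr ⟨F, hF⟩) hGd
      have hcardG' : (G.erase F).card = G.card - 1 := Finset.card_erase_of_mem hF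
      have hsuppa : ∀ s ∈ a.support, s ∈ c.support ∧ s ⊆ F := by
        intro s hsa
        rw [ha, Finsupp.support_filter, Finset.mem_filter] at hsa
        exact hsa
      have hsuppb : ∀ s ∈ b.support, s ∈ c.support ∧ ∃ F' ∈ G.erase F, s ⊆ F' := by
        intro s hsb
        rw [hb, Finsupp.support_filter, Finset.mem_filter] at hsb
        obtain ⟨_, F', hF', hsF'⟩ := hs s hsb.1
        refine ⟨hsb.1, F', Finset.mem_erase.mpr ⟨?_, hF'⟩, hsF'⟩
        rintro rfl; exact hsb.2 hsF'
      have hDab : DD M a = - DD M b := by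
        have h0 : DD M a + DD M b = 0 := by rw [← map_add, hab, hc]
        exact eq_neg_of_add_eq_zero_left h0
      -- the intersection complex
      set G'' := (G.erase F).image (fun F' => F' ∩ F) with hG''
      have hG''n : G''.card ≤ n := le_trans (Finset.card_image_le) (by omega)
      have hG''d : G''.card ≤ d - 1 :=
        le_trans (Finset.card_image_le) (by omega)
      -- apply induction to ∂a
      have hbdrya : ∀ t ∈ (DD M a).support, t.card = d - 1 ∧ ∃ F'' ∈ G'', t ⊆ F'' := by
        intro t ht
        obtain ⟨s, hsa, x, hxs, rfl⟩ := support_DD M a t ht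
        obtain ⟨hsc, hsF⟩ := hsuppa s hsa
        have hcard : (s.erase x).card = d - 1 := by
          rw [Finset.card_erase_of_mem hxs, (hs s hsc).1]
        refine ⟨hcard, ?_⟩
        have ht' : s.erase x ∈ (DD M b).support := by
          have : (DD M a).support = (DD M b).support := by rw [hDab, Finsupp.support_neg]
          rw [← this]; exact ht
        obtain ⟨s', hsb, x', hx's, heq⟩ := support_DD M b _ ht'
        obtain ⟨_, F', hF', hs'F'⟩ := hsuppb s' hsb
        refine ⟨F' ∩ F, Finset.mem_image.mpr ⟨F', hF', rfl⟩, ?_⟩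
        intro y hy
        refine Finset.mem_inter.mpr
          ⟨hs'F' (by rw [heq] at hy; exact Finset.mem_of_mem_erase hy),
          hsF (Finset.mem_of_mem_erase hy)⟩
      obtain ⟨c', hc'1, hc'2⟩ := ih G'' hG''n (d - 1) hG''d (DD M a) (DD_DD M a) hbdrya
      -- properties of c'
      have hc'supp : ∀ s ∈ c'.support, s.card = d ∧ s ⊆ F ∧ ∃ F' ∈ G.erase F, s ⊆ F' := by
        intro s hsc'
        obtain ⟨hcard, F'', hF''G, hsF''⟩ := hc'2 s hsc'
        obtain ⟨F', hF', rfl⟩ := Finset.mem_image.mp hF''G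
        refine ⟨by omega, fun y hy => Finset.mem_inter.mp (hsF'' hy) |>.2,
          F', hF', fun y hy => Finset.mem_inter.mp (hsF'' hy) |>.1⟩
      -- the cycle z = a - c' lives in the simplex on F
      set z := a - c' with hz
      have hzcyc : DD M z = 0 := by rw [hz, map_sub, hc'1, sub_self]
      have hzsupp : ∀ s ∈ z.support, s.card = d ∧ s ⊆ F := by
        intro s hsz
        have := Finsupp.support_sub hsz
        rcases Finset.mem_union.mp this with h | h
        · exact ⟨(hs s (hsuppa s h).1).1, (hsuppa s h).2⟩
        · exact ⟨(hc'supp s h).1, (hc'supp s h).2.1⟩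
      -- cone off the cycle z
      have hcone : ∃ w : Finset V →₀ M, DD M w = z ∧
          ∀ s ∈ w.support, s.card = d + 1 ∧ s ⊆ F := by
        rcases Finset.eq_empty_or_nonempty z.support with hze | ⟨s₀, hs₀⟩
        · exact ⟨0, by simp [Finsupp.support_eq_empty.mp hze], by simp⟩
        · have hFne : F.Nonempty := by
            obtain ⟨hcard, hsub⟩ := hzsupp s₀ hs₀
            obtain ⟨y, hy⟩ := Finset.card_pos.mp (by omega : 0 < s₀.card)
            exact ⟨y, hsub hy⟩
          set v := F.min' hFne with hv
          refine ⟨cone M v z, ?_, ?_⟩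
          · have := cone_homotopy M (v := v) z (fun s hsz x hx =>
              F.min'_le x ((hzsupp s hsz).2 hx))
            rw [hzcyc, map_zero, add_zero] at this
            exact this
          · intro s hsw
            obtain ⟨s', hs', hvs', rfl⟩ := support_cone M v z s hsw
            obtain ⟨hcard, hsub⟩ := hzsupp s' hs'
            refine ⟨by rw [Finset.card_insert_of_notMem hvs', hcard], ?_⟩
            exact Finset.insert_subset (F.min'_mem hFne) hsub
      obtain ⟨w, hw1, hw2⟩ := hcone
      -- apply induction to c' + b
      have hcyc2 : DD M (c' + b) = 0 := by
        rw [map_add, hc'1, hDab]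
        abel
      have hsupp2 : ∀ s ∈ (c' + b).support, s.card = d ∧ ∃ F' ∈ G.erase F, s ⊆ F' := by
        intro s hse
        rcases Finset.mem_union.mp (Finsupp.support_add hse) with h | h
        · obtain ⟨h1, h2, h3⟩ := hc'supp s h
          exact ⟨h1, h3⟩
        · exact ⟨(hs s (hsuppb s h).1).1, (hsuppb s h).2⟩
      obtain ⟨e', he'1, he'2⟩ := ih (G.erase F) (by omega) d (by omega) (c' + b) hcyc2 hsupp2
      refine ⟨w + e', ?_, ?_⟩
      · rw [map_add, hw1, he'1, hz, ← hab]
        abel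
      · intro s hse
        rcases Finset.mem_union.mp (Finsupp.support_add hse) with h | h
        · exact ⟨(hw2 s h).1, F, hF, (hw2 s h).2⟩
        · obtain ⟨hcard, F', hF', hsub⟩ := he'2 s h
          exact ⟨hcard, F', Finset.mem_of_mem_erase hF', hsub⟩

end AuxList

namespace SComplex

variable {V : Type} [LinearOrder V] (K : SComplex V) (M : Type) [AddCommGroup M]

noncomputable def toAmb (i : ℤ) : K.chains M i →ₗ[ℤ] (Finset V →₀ M) :=
  Finsupp.lsum ℤ fun s => Finsupp.lsingle s.1

theorem toAmb_single (i : ℤ) (s : K.czFaces i) (m : M) :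
    K.toAmb M i (Finsupp.single s m) = Finsupp.single s.1 m := by
  rw [toAmb, Finsupp.lsum_single]; rfl

open Classical in
noncomputable def restrict (i : ℤ) : (Finset V →₀ M) →ₗ[ℤ] K.chains M i :=
  Finsupp.lsum ℤ fun s =>
    if h : s ∈ K.faces ∧ (s.card : ℤ) = i + 1 then
      (Finsupp.lsingle (⟨s, h⟩ : K.czFaces i) : M →ₗ[ℤ] K.chains M i)
    else 0

theorem restrict_toAmb (i : ℤ) (x : K.chains M i) : K.restrict M i (K.toAmb M i x) = x := by
  classical
  have : (K.restrict M i).comp (K.toAmb M i) = LinearMap.id := by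
    apply Finsupp.lhom_ext
    intro s m
    simp only [LinearMap.comp_apply, toAmb_single, LinearMap.id_apply]
    rw [restrict, Finsupp.lsum_single, dif_pos s.2]
    rfl
  exact LinearMap.congr_fun this x

theorem toAmb_injective (i : ℤ) : Function.Injective (K.toAmb M i) :=
  Function.LeftInverse.injective (restrict_toAmb K M i)

theorem toAmb_restrict (i : ℤ) (e : Finset V →₀ M)
    (he : ∀ t ∈ e.support, t ∈ K.faces ∧ (t.card : ℤ) = i + 1) :
    K.toAmb M i (K.restrict M i e) = e := by
  classical
  have he2 : K.toAmb M i (K.restrict M i e) = ∑ t ∈ e.support, Finsupp.single t (e t) := by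
    conv_lhs => rw [← Finsupp.sum_single e, Finsupp.sum, map_sum, map_sum]
    apply Finset.sum_congr rfl
    intro t ht
    rw [restrict, Finsupp.lsum_single, dif_pos (he t ht)]
    exact toAmb_single K M i _ _
  rw [he2, ← Finsupp.sum, Finsupp.sum_single]

theorem support_toAmb (i : ℤ) (x : K.chains M i) :
    ∀ t ∈ (K.toAmb M i x).support, t ∈ K.faces ∧ (t.card : ℤ) = i + 1 := by
  classical
  intro t ht
  rw [← Finsupp.sum_single x, Finsupp.sum, map_sum] at ht
  obtain ⟨s, _, ht⟩ := Finset.mem_biUnion.mp (Finsupp.support_finset_sum ht)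
  rw [toAmb_single] at ht
  have := Finset.mem_singleton.mp (Finsupp.support_single_subset ht)
  exact this ▸ s.2

theorem toAmb_bdry (i : ℤ) (x : K.chains M i) :
    K.toAmb M (i - 1) (K.bdry M i x) = DD M (K.toAmb M i x) := by
  have : (K.toAmb M (i - 1)).comp (K.bdry M i) = (DD M).comp (K.toAmb M i) := by
    apply Finsupp.lhom_ext
    intro s m
    simp only [LinearMap.comp_apply, toAmb_single]
    rw [bdry, Finsupp.lsum_single, DD, Finsupp.lsum_single]
    rw [LinearMap.sum_apply, LinearMap.sum_apply, map_sum]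
    apply Finset.sum_congr rfl
    intro a _
    rw [LinearMap.smul_apply, LinearMap.smul_apply, map_smul]
    congr 1
    exact toAmb_single K M (i - 1) _ _
  exact LinearMap.congr_fun this x

theorem toAmb_chainsCongr {i j : ℤ} (h : i = j) (x : K.chains M i) :
    K.toAmb M j (K.chainsCongr M h x) = K.toAmb M i x := by
  subst h; rfl

theorem toAmb_chainsCongr_symm {i j : ℤ} (h : i = j) (x : K.chains M j) :
    K.toAmb M i ((K.chainsCongr M h).symm x) = K.toAmb M j x := by
  subst h; rfl

end SComplex

-- ===================== end auxiliary development =====================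


/-- A simplicial complex with `n` vertices and at most `μ` facets has vanishing
reduced homology with field coefficients in all degrees `i ≥ μ - 1`. -/
theorem stmt0 {n : ℕ} (K : SComplex (Fin n)) (μ : ℕ)
    (hμ : (SComplex.facets K).ncard ≤ μ) (k : Type) [Field k] :
    ∀ i : ℤ, (μ : ℤ) - 1 ≤ i → Subsingleton (K.redHomology k i) := by
  classical
  intro i hi
  have hμ0 : (0 : ℤ) ≤ (μ : ℤ) := Int.natCast_nonneg μ
  rw [Submodule.Quotient.subsingleton_iff, Submodule.comap_subtype_eq_top]
  intro x hx
  rw [Submodule.mem_map_equiv]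
  rw [LinearMap.mem_range]
  -- set up the finset of facets
  have hfin : (SComplex.facets K).Finite := Set.toFinite _
  set G : Finset (Finset (Fin n)) := hfin.toFinset with hG
  have hGcard : G.card ≤ μ := by
    rwa [Set.ncard_eq_toFinset_card _ hfin] at hμ
  have hGfaces : ∀ F ∈ G, F ∈ K.faces := by
    intro F hFG
    rw [hG, Set.Finite.mem_toFinset] at hFG
    exact hFG.1
  have hface_facet : ∀ s ∈ K.faces, ∃ F ∈ G, s ⊆ F := by
    intro s hs
    obtain ⟨F, hF, hmax⟩ := Set.Finite.exists_maximalFor id {u | u ∈ K.faces ∧ s ⊆ u}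
      (Set.toFinite _) ⟨s, hs, subset_rfl⟩
    refine ⟨F, ?_, hF.2⟩
    rw [hG, Set.Finite.mem_toFinset]
    exact ⟨hF.1, fun t ht hFt => Finset.Subset.antisymm hFt (hmax (j := t) ⟨ht, hF.2.trans hFt⟩ hFt)⟩
  -- degree bookkeeping
  set d : ℕ := (i + 1).toNat with hdd
  have hd : (d : ℤ) = i + 1 := Int.toNat_of_nonneg (by omega)
  have hGd : G.card ≤ d := by
    have : (μ : ℤ) ≤ (d : ℤ) := by omega
    have hμd : μ ≤ d := by exact_mod_cast this
    omega
  -- move the cycle to the ambient chain complex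
  set X := K.toAmb k i x with hX
  have hXcyc : DD k X = 0 := by
    rw [hX, ← K.toAmb_bdry k i x, LinearMap.mem_ker.mp hx, map_zero]
  have hXsupp : ∀ s ∈ X.support, s.card = d ∧ ∃ F ∈ G, s ⊆ F := by
    intro s hsX
    obtain ⟨hsf, hsc⟩ := K.support_toAmb k i x s hsX
    refine ⟨by exact_mod_cast hsc.trans hd.symm, hface_facet s hsf⟩
  obtain ⟨e, he1, he2⟩ := main_lemma k G.card G le_rfl d hGd X hXcyc hXsupp
  -- restrict the bounding chain to the complex
  have hesupp : ∀ t ∈ e.support, t ∈ K.faces ∧ (t.card : ℤ) = (i + 1) + 1 := by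
    intro t ht
    obtain ⟨htc, F, hFG, htF⟩ := he2 t ht
    refine ⟨K.down_closed (hGfaces F hFG) htF, ?_⟩
    rw [htc]
    push_cast
    omega
  refine ⟨K.restrict k (i + 1) e, ?_⟩
  apply K.toAmb_injective k (i + 1 - 1)
  rw [K.toAmb_bdry k (i + 1) _, K.toAmb_restrict k (i + 1) e hesupp,
    K.toAmb_chainsCongr_symm k _ x, he1]
end

section
/- A simplicial complex Δ on n vertices with at most n − 3 facets satisfies H̃_{n−3}(Δ; k) = H̃_{n−4}(Δ; k) = 0 for any field k. -/
open Finset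

set_option linter.unusedSectionVars false
set_option linter.unusedTactic false
set_option maxHeartbeats 1000000

namespace SComplex

variable {V : Type} [LinearOrder V]

lemma indexOf_eq_countP {l : List V} (hl : l.Pairwise (· < ·)) {a} (ha : a ∈ l) :
    l.idxOf a = l.countP (fun x => decide (x < a)) := by
  induction l with
  | nil => simp at ha
  | cons b t ih =>
    rcases eq_or_ne a b with rfl | hne
    · rw [List.idxOf_cons_self]
      symm
      rw [List.countP_eq_zero]
      intro x hx
      rcases List.mem_cons.mp hx with rfl | hx
      · simp
      · simpa using not_lt.mpr (le_of_lt ((List.pairwise_cons.mp hl).1 x hx))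
    · have hat : a ∈ t := by
        rcases List.mem_cons.mp ha with rfl | h
        · exact absurd rfl hne
        · exact h
      rw [List.idxOf_cons_ne _ (Ne.symm hne), List.countP_cons,
        ih (List.pairwise_cons.mp hl).2 hat]
      have : b < a := (List.pairwise_cons.mp hl).1 a hat
      simp [this, Nat.succ_eq_add_one]

def indl (s : Finset V) (a : V) : ℕ := (s.filter (· < a)).card

lemma indexOf_sort (s : Finset V) {a : V} (ha : a ∈ s) :
    (s.sort (· ≤ ·)).idxOf a = indl s a := by
  rw [indexOf_eq_countP (Finset.sortedLT_sort s).pairwise ((Finset.mem_sort _).mpr ha)]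
  rw [(Finset.sort_perm_toList s _).countP_eq]
  have h1 : (s.toList.countP fun x => decide (x < a)) = Multiset.countP (· < a) s.val := by
    rw [← Finset.coe_toList s, Multiset.coe_countP]
  rw [h1, Multiset.countP_eq_card_filter]
  rfl

lemma indl_insert_self {s : Finset V} {v : V} : indl (insert v s) v = indl s v := by
  unfold indl
  rw [Finset.filter_insert, if_neg (lt_irrefl v)]

lemma indl_insert {s : Finset V} {v a : V} (hv : v ∉ s) :
    indl (insert v s) a = indl s a + if v < a then 1 else 0 := by
  unfold indl
  rw [Finset.filter_insert]
  split
  · rw [Finset.card_insert_of_notMem (fun h => hv (Finset.mem_filter.mp h).1)]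
  · omega

lemma indl_erase {s : Finset V} {a : V} (ha : a ∈ s) (b : V) :
    indl s b = indl (s.erase a) b + if a < b then 1 else 0 := by
  unfold indl
  rw [Finset.filter_erase]
  split
  · rw [Finset.card_erase_of_mem (Finset.mem_filter.mpr ⟨ha, ‹_›⟩)]
    have : 1 ≤ (Finset.filter (· < b) s).card :=
      Finset.card_pos.mpr ⟨a, Finset.mem_filter.mpr ⟨ha, ‹_›⟩⟩
    omega
  · have hna : a ∉ Finset.filter (fun x => x < b) s :=
      fun h => ‹¬ a < b› (Finset.mem_filter.mp h).2
    rw [Finset.erase_eq_of_notMem hna, add_zero]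

lemma sign_bdry {s : Finset V} {a b : V} (ha : a ∈ s) (hb : b ∈ s) (hab : a ≠ b) :
    (-1:ℤ)^(indl s a) * (-1:ℤ)^(indl (s.erase a) b) +
      (-1:ℤ)^(indl s b) * (-1:ℤ)^(indl (s.erase b) a) = 0 := by
  rcases hab.lt_or_gt with h | h
  · rw [indl_erase ha b, if_pos h, indl_erase hb a, if_neg (not_lt.mpr h.le), add_zero]
    ring
  · rw [indl_erase ha b, if_neg (not_lt.mpr h.le), indl_erase hb a, if_pos h, add_zero]
    ring

lemma sign_cone {s : Finset V} {v a : V} (hv : v ∉ s) (ha : a ∈ s) :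
    (-1:ℤ)^(indl (insert v s) v) * (-1:ℤ)^(indl (insert v s) a) +
      (-1:ℤ)^(indl s a) * (-1:ℤ)^(indl (insert v (s.erase a)) v) = 0 := by
  have hav : a ≠ v := fun h => hv (h ▸ ha)
  rw [indl_insert_self, indl_insert hv, indl_insert_self,
    indl_erase ha v]
  rcases hav.lt_or_gt with h | h
  · rw [if_pos h, if_neg (not_lt.mpr h.le), add_zero]; ring
  · rw [if_neg (not_lt.mpr h.le), if_pos h, add_zero]; ring

variable (K : SComplex V) (M : Type) [AddCommGroup M]

def eface (i : ℤ) (s : K.czFaces i) (a : V) (ha : a ∈ s.1) : K.czFaces (i-1) :=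
  ⟨s.1.erase a, K.down_closed s.2.1 (Finset.erase_subset a s.1), by
    have h2 := s.2.2
    have h3 : 1 ≤ s.1.card := Finset.card_pos.mpr ⟨a, ha⟩
    rw [Finset.card_erase_of_mem ha, Nat.cast_sub h3, h2]; ring⟩

lemma bdry_single (i : ℤ) (s : K.czFaces i) (m : M) :
    K.bdry M i (Finsupp.single s m) =
      ∑ a ∈ s.1.attach,
        ((-1:ℤ)^(indl s.1 a.1)) • Finsupp.single (K.eface i s a.1 a.2) m := by
  rw [bdry, Finsupp.lsum_single, LinearMap.sum_apply]
  refine Finset.sum_congr rfl fun a _ => ?_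
  rw [LinearMap.smul_apply]
  erw [Finsupp.lsingle_apply]
  rw [indexOf_sort _ a.2]
  rfl

lemma chainsCongr_single {i j : ℤ} (h : i = j) (s : K.czFaces i) (m : M) :
    K.chainsCongr M h (Finsupp.single s m)
      = Finsupp.single ⟨s.1, s.2.1, by rw [s.2.2, h]⟩ m := by
  subst h; rfl

lemma bdry_chainsCongr {i j : ℤ} (h : i = j) (z : K.chains M i) :
    K.bdry M j (K.chainsCongr M h z) = K.chainsCongr M (by rw [h]) (K.bdry M i z) := by
  subst h; rfl

def suppIn (P : Finset V → Prop) (i : ℤ) : Submodule ℤ (K.chains M i) where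
  carrier := {z | ∀ s ∈ z.support, P s.1}
  add_mem' := by
    classical
    intro a b ha hb s hs
    rcases Finset.mem_union.mp (Finsupp.support_add hs) with h | h
    · exact ha s h
    · exact hb s h
  zero_mem' := by intro s hs; simp at hs
  smul_mem' := fun c z hz s hs => hz s (Finsupp.support_smul hs)

lemma mem_suppIn {P : Finset V → Prop} {i : ℤ} {z : K.chains M i} :
    z ∈ K.suppIn M P i ↔ ∀ s ∈ z.support, P s.1 := Iff.rfl

lemma single_mem_suppIn {P : Finset V → Prop} {i : ℤ} (s : K.czFaces i) (m : M)
    (h : P s.1) : Finsupp.single s m ∈ K.suppIn M P i := by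
  intro t ht
  have := Finsupp.support_single_subset ht
  rw [Finset.mem_singleton] at this
  rw [this]; exact h

lemma bdry_mem_suppIn {P : Finset V → Prop} (Pdc : ∀ ⦃t u⦄, P t → u ⊆ t → P u)
    {i : ℤ} {z : K.chains M i} (hz : z ∈ K.suppIn M P i) :
    K.bdry M i z ∈ K.suppIn M P (i-1) := by
  rw [bdry, Finsupp.lsum_apply]
  refine Submodule.sum_mem _ fun s hs => ?_
  dsimp only
  rw [LinearMap.sum_apply]
  refine Submodule.sum_mem _ fun a _ => ?_
  rw [LinearMap.smul_apply]
  erw [Finsupp.lsingle_apply]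
  refine Submodule.smul_mem _ _ (K.single_mem_suppIn M _ _ ?_)
  exact Pdc (hz s hs) (Finset.erase_subset _ _)

lemma chainsCongr_mem_suppIn {P : Finset V → Prop} {i j : ℤ} (h : i = j)
    {z : K.chains M i} (hz : z ∈ K.suppIn M P i) :
    K.chainsCongr M h z ∈ K.suppIn M P j := by
  subst h; exact hz

def vface (v : V) (i : ℤ) (s : K.czFaces i) (h : insert v s.1 ∈ K.faces)
    (hv : v ∉ s.1) : K.czFaces (i+1) :=
  ⟨insert v s.1, h, by
    rw [Finset.card_insert_of_notMem hv]
    push_cast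
    rw [s.2.2]⟩

open scoped Classical in
noncomputable def cone (v : V) (i : ℤ) : K.chains M i →ₗ[ℤ] K.chains M (i+1) :=
  Finsupp.lsum ℤ fun s =>
    if h : v ∉ s.1 ∧ insert v s.1 ∈ K.faces then
      ((-1:ℤ)^(indl (insert v s.1) v)) •
        (Finsupp.lsingle (K.vface v i s h.2 h.1) : M →ₗ[ℤ] K.chains M (i+1))
    else 0

lemma cone_single_pos (v : V) (i : ℤ) (s : K.czFaces i) (m : M)
    (h1 : v ∉ s.1) (h2 : insert v s.1 ∈ K.faces) :
    K.cone M v i (Finsupp.single s m) =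
      ((-1:ℤ)^(indl (insert v s.1) v)) • Finsupp.single (K.vface v i s h2 h1) m := by
  classical
  rw [cone, Finsupp.lsum_single]
  rw [dif_pos ⟨h1, h2⟩]
  rfl

lemma cone_single_neg (v : V) (i : ℤ) (s : K.czFaces i) (m : M)
    (h : v ∈ s.1) :
    K.cone M v i (Finsupp.single s m) = 0 := by
  classical
  rw [cone, Finsupp.lsum_single]
  rw [dif_neg (by tauto)]
  rfl

lemma cone_mem_suppIn {G : Finset V} {v : V} (hv : v ∈ G) {i : ℤ} {z : K.chains M i}
    (hz : z ∈ K.suppIn M (· ⊆ G) i) :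
    K.cone M v i z ∈ K.suppIn M (· ⊆ G) (i+1) := by
  rw [cone, Finsupp.lsum_apply]
  refine Submodule.sum_mem _ fun s hs => ?_
  dsimp only
  split
  · rw [LinearMap.smul_apply, Finsupp.lsingle_apply]
    refine Submodule.smul_mem _ _ (K.single_mem_suppIn M _ _ ?_)
    exact Finset.insert_subset hv (hz s hs)
  · simp only [LinearMap.zero_apply]
    exact Submodule.zero_mem _

lemma sum_attach_dite {t : Finset V} {β : Type*} [AddCommMonoid β] (F : ∀ a ∈ t, β) :
    ∑ a ∈ t.attach, F a.1 a.2 = ∑ a ∈ t, (if h : a ∈ t then F a h else 0) := by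
  rw [← Finset.sum_attach t (fun a => if h : a ∈ t then F a h else 0)]
  exact Finset.sum_congr rfl fun a _ => (dif_pos a.2).symm

lemma neg_one_pow_smul_smul {N : Type*} [AddCommGroup N] (k : ℕ) (x : N) :
    ((-1:ℤ)^k) • ((-1:ℤ)^k • x) = x := by
  rw [smul_smul, ← pow_add]
  rw [Even.neg_one_pow ⟨k, rfl⟩, one_smul]

lemma single_congr {i : ℤ} {s t : K.czFaces i} (h : s.1 = t.1) (m : M) :
    Finsupp.single s m = Finsupp.single t m := by
  rw [Subtype.ext h]

lemma smul_single_eq {i : ℤ} {x y : K.czFaces i} {k l : ℕ} (hk : k = l) (h : x.1 = y.1)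
    (m : M) : (-1:ℤ)^k • ((-1:ℤ)^l • Finsupp.single x m) = Finsupp.single y m := by
  subst hk
  rw [K.single_congr M h m, neg_one_pow_smul_smul]

def aface (v : V) (i : ℤ) (s : K.czFaces i) (hvs : v ∉ s.1) (hG : insert v s.1 ∈ K.faces)
    (a : V) (ha : a ∈ s.1) : K.czFaces i :=
  ⟨insert v (s.1.erase a),
    K.down_closed hG (Finset.insert_subset_insert v (Finset.erase_subset a s.1)),
    by
      have hva : v ∉ s.1.erase a := fun h => hvs (Finset.mem_of_mem_erase h)
      rw [Finset.card_insert_of_notMem hva, Finset.card_erase_of_mem ha]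
      have h3 : 1 ≤ s.1.card := Finset.card_pos.mpr ⟨a, ha⟩
      push_cast [h3]
      rw [s.2.2]; ring⟩

lemma homotopy_single {G : Finset V} (hG : G ∈ K.faces) {v : V} (hv : v ∈ G) {d : ℤ}
    (s : K.czFaces d) (hs : s.1 ⊆ G) (m : M) :
    K.chainsCongr M (show d+1-1 = d by ring) (K.bdry M (d+1) (K.cone M v d (Finsupp.single s m)))
      + K.chainsCongr M (show d-1+1 = d by ring)
          (K.cone M v (d-1) (K.bdry M d (Finsupp.single s m)))
      = Finsupp.single s m := by
  classical
  by_cases hvs : v ∈ s.1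
  · -- v ∈ s : first term is 0, second term gives back single s m
    rw [K.cone_single_neg M v d s m hvs, map_zero, map_zero, zero_add]
    rw [K.bdry_single, map_sum, map_sum]
    rw [Finset.sum_eq_single_of_mem (⟨v, hvs⟩ : {x // x ∈ s.1}) (Finset.mem_attach _ _)]
    · have h1 : v ∉ s.1.erase v := Finset.notMem_erase v s.1
      have h2 : insert v (s.1.erase v) ∈ K.faces := by
        rw [Finset.insert_erase hvs]; exact s.2.1
      rw [map_smul, K.cone_single_pos M v (d-1) _ m h1 h2, map_smul, map_smul,
        K.chainsCongr_single]
      refine K.smul_single_eq M ?_ ?_ m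
      · show indl s.1 v = indl (insert v (s.1.erase v)) v
        rw [Finset.insert_erase hvs]
      · show insert v (s.1.erase v) = s.1
        exact Finset.insert_erase hvs
    · intro b _ hb
      have hvb : v ∈ (s.1.erase b.1) :=
        Finset.mem_erase.mpr ⟨fun h => hb (Subtype.ext h.symm), hvs⟩
      rw [map_smul, K.cone_single_neg M v (d-1) _ m hvb, smul_zero, map_zero]
  · -- v ∉ s
    have hins : insert v s.1 ∈ K.faces := K.down_closed hG (Finset.insert_subset hv hs)
    have h1 : K.chainsCongr M (show d+1-1 = d by ring)
        (K.bdry M (d+1) (K.cone M v d (Finsupp.single s m)))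
        = Finsupp.single s m +
          ∑ a ∈ s.1, (if ha : a ∈ s.1 then
            ((-1:ℤ)^(indl (insert v s.1) v) * (-1:ℤ)^(indl (insert v s.1) a)) •
              Finsupp.single (K.aface v d s hvs hins a ha) m else 0) := by
      rw [K.cone_single_pos M v d s m hvs hins, map_smul, map_smul, K.bdry_single, map_sum]
      have hstep : ∀ b : {x // x ∈ insert v s.1},
          K.chainsCongr M (show d+1-1 = d by ring)
              (((-1:ℤ)^(indl (insert v s.1) b.1)) •
                Finsupp.single (K.eface (d+1) (K.vface v d s hins hvs) b.1 b.2) m)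
            = ((-1:ℤ)^(indl (insert v s.1) b.1)) •
              (if b.1 = v then Finsupp.single s m
               else if hb : b.1 ∈ s.1 then Finsupp.single (K.aface v d s hvs hins b.1 hb) m
               else 0) := by
        intro b
        rw [map_smul, K.chainsCongr_single]
        by_cases hbv : b.1 = v
        · rw [if_pos hbv]
          congr 1
          refine K.single_congr M ?_ m
          show (insert v s.1).erase b.1 = s.1
          rw [hbv, Finset.erase_insert hvs]
        · rw [if_neg hbv]
          have hbs : b.1 ∈ s.1 := (Finset.mem_insert.mp b.2).resolve_left hbv
          rw [dif_pos hbs]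
          congr 1
          refine K.single_congr M ?_ m
          show (insert v s.1).erase b.1 = insert v (s.1.erase b.1)
          exact Finset.erase_insert_of_ne (fun h => hbv h.symm)
      calc ((-1:ℤ)^(indl (insert v s.1) v)) • ∑ b ∈ (insert v s.1).attach,
              K.chainsCongr M (show d+1-1 = d by ring)
              (((-1:ℤ)^(indl (insert v s.1) b.1)) •
                Finsupp.single (K.eface (d+1) (K.vface v d s hins hvs) b.1 b.2) m)
          = ((-1:ℤ)^(indl (insert v s.1) v)) • ∑ b ∈ (insert v s.1).attach,
              ((-1:ℤ)^(indl (insert v s.1) b.1)) •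
              (if b.1 = v then Finsupp.single s m
               else if hb : b.1 ∈ s.1 then Finsupp.single (K.aface v d s hvs hins b.1 hb) m
               else 0) := by
            rw [Finset.sum_congr rfl (fun b _ => hstep b)]
        _ = ((-1:ℤ)^(indl (insert v s.1) v)) • ∑ b ∈ insert v s.1,
              (if h : b ∈ insert v s.1 then
              ((-1:ℤ)^(indl (insert v s.1) b)) •
              (if b = v then Finsupp.single s m
               else if hb : b ∈ s.1 then Finsupp.single (K.aface v d s hvs hins b hb) m
               else 0) else 0) := by
            refine congrArg (fun w => ((-1:ℤ)^(indl (insert v s.1) v)) • w) ?_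
            rw [← Finset.sum_attach (insert v (s.1:Finset V)) (fun b =>
              (if h : b ∈ insert v s.1 then
              ((-1:ℤ)^(indl (insert v s.1) b)) •
              (if b = v then Finsupp.single s m
               else if hb : b ∈ s.1 then Finsupp.single (K.aface v d s hvs hins b hb) m
               else 0) else 0))]
            exact Finset.sum_congr rfl fun b _ => by rw [dif_pos b.2]
        _ = Finsupp.single s m +
            ∑ a ∈ s.1, (if ha : a ∈ s.1 then
              ((-1:ℤ)^(indl (insert v s.1) v) * (-1:ℤ)^(indl (insert v s.1) a)) •
                Finsupp.single (K.aface v d s hvs hins a ha) m else 0) := by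
            rw [Finset.sum_insert hvs, dif_pos (Finset.mem_insert_self v s.1), if_pos rfl,
              smul_add, neg_one_pow_smul_smul, Finset.smul_sum]
            congr 1
            refine Finset.sum_congr rfl fun a ha => ?_
            rw [dif_pos (Finset.mem_insert_of_mem ha), dif_pos ha,
              if_neg (fun (h : a = v) => hvs (h ▸ ha)), dif_pos ha, smul_smul]
    have h2 : K.chainsCongr M (show d-1+1 = d by ring)
        (K.cone M v (d-1) (K.bdry M d (Finsupp.single s m)))
        = ∑ a ∈ s.1, (if ha : a ∈ s.1 then
            (((-1:ℤ)^(indl s.1 a)) * (-1:ℤ)^(indl (insert v (s.1.erase a)) v)) •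
              Finsupp.single (K.aface v d s hvs hins a ha) m
          else 0) := by
      rw [K.bdry_single, map_sum, map_sum]
      have hstep : ∀ b : {x // x ∈ (s.1 : Finset V)},
          K.chainsCongr M (show d-1+1 = d by ring)
            (K.cone M v (d-1) (((-1:ℤ)^(indl s.1 b.1)) •
              Finsupp.single (K.eface d s b.1 b.2) m))
          = if hb : b.1 ∈ s.1 then
              (((-1:ℤ)^(indl s.1 b.1)) * (-1:ℤ)^(indl (insert v (s.1.erase b.1)) v)) •
                Finsupp.single (K.aface v d s hvs hins b.1 hb) m
            else 0 := by
        intro b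
        have hvb : v ∉ s.1.erase b.1 := fun h => hvs (Finset.mem_of_mem_erase h)
        have hib : insert v (s.1.erase b.1) ∈ K.faces :=
          K.down_closed hins (Finset.insert_subset_insert v (Finset.erase_subset b.1 s.1))
        rw [map_smul, K.cone_single_pos M v (d-1) _ m hvb hib, map_smul, map_smul,
          K.chainsCongr_single, dif_pos b.2, smul_smul]
        exact congrArg (fun w => ((-1:ℤ)^(indl s.1 b.1) *
          (-1:ℤ)^(indl (insert v (s.1.erase b.1)) v)) • w) (K.single_congr M rfl m)
      calc ∑ b ∈ s.1.attach, K.chainsCongr M (show d-1+1 = d by ring)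
              (K.cone M v (d-1) (((-1:ℤ)^(indl s.1 b.1)) •
                Finsupp.single (K.eface d s b.1 b.2) m))
          = ∑ b ∈ s.1.attach, (if hb : b.1 ∈ s.1 then
              (((-1:ℤ)^(indl s.1 b.1)) * (-1:ℤ)^(indl (insert v (s.1.erase b.1)) v)) •
                Finsupp.single (K.aface v d s hvs hins b.1 hb) m
            else 0) := Finset.sum_congr rfl (fun b _ => hstep b)
        _ = _ := by
            rw [← Finset.sum_attach (s.1:Finset V) (fun a => if ha : a ∈ s.1 then
              (((-1:ℤ)^(indl s.1 a)) * (-1:ℤ)^(indl (insert v (s.1.erase a)) v)) •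
                Finsupp.single (K.aface v d s hvs hins a ha) m
              else 0)]
    rw [h1, h2, add_assoc, ← Finset.sum_add_distrib]
    have hz : ∀ a ∈ s.1, ((if ha : a ∈ s.1 then
            ((-1:ℤ)^(indl (insert v s.1) v) * (-1:ℤ)^(indl (insert v s.1) a)) •
              Finsupp.single (K.aface v d s hvs hins a ha) m else 0) +
          (if ha : a ∈ s.1 then
            (((-1:ℤ)^(indl s.1 a)) * (-1:ℤ)^(indl (insert v (s.1.erase a)) v)) •
              Finsupp.single (K.aface v d s hvs hins a ha) m
          else 0)) = 0 := by
      intro a ha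
      rw [dif_pos ha, dif_pos ha, ← add_smul, sign_cone hvs ha, zero_smul]
    rw [Finset.sum_eq_zero hz, add_zero]

lemma eface_coe (i : ℤ) (s : K.czFaces i) (a : V) (ha : a ∈ s.1) :
    (K.eface i s a ha).1 = s.1.erase a := rfl

lemma homotopy {G : Finset V} (hG : G ∈ K.faces) {v : V} (hv : v ∈ G) {d : ℤ}
    (z : K.chains M d) (hz : z ∈ K.suppIn M (· ⊆ G) d) :
    K.chainsCongr M (show d+1-1 = d by ring) (K.bdry M (d+1) (K.cone M v d z))
      + K.chainsCongr M (show d-1+1 = d by ring) (K.cone M v (d-1) (K.bdry M d z))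
      = z := by
  have L1 : K.chains M d →ₗ[ℤ] K.chains M d :=
    ((K.chainsCongr M (show d+1-1 = d by ring)).toLinearMap.comp
      ((K.bdry M (d+1)).comp (K.cone M v d))) +
    ((K.chainsCongr M (show d-1+1 = d by ring)).toLinearMap.comp
      ((K.cone M v (d-1)).comp (K.bdry M d)))
  have key : ∀ (L : K.chains M d →ₗ[ℤ] K.chains M d),
      (L = ((K.chainsCongr M (show d+1-1 = d by ring)).toLinearMap.comp
        ((K.bdry M (d+1)).comp (K.cone M v d))) +
      ((K.chainsCongr M (show d-1+1 = d by ring)).toLinearMap.comp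
        ((K.cone M v (d-1)).comp (K.bdry M d)))) → L z = z := by
    intro L hL
    have expand : L z = ∑ s ∈ z.support, L (Finsupp.single s (z s)) := by
      conv_lhs => rw [← Finsupp.sum_single z, Finsupp.sum, map_sum]
    rw [expand]
    conv_rhs => rw [← Finsupp.sum_single z, Finsupp.sum]
    refine Finset.sum_congr rfl fun s hs => ?_
    rw [hL]
    simp only [LinearMap.add_apply, LinearMap.comp_apply, LinearEquiv.coe_coe]
    exact K.homotopy_single M hG hv s (hz s hs) (z s)
  have := key _ rfl
  simpa using this

lemma cone_acyclic {G : Finset V} (hG : G ∈ K.faces) {d : ℤ} (hd : 0 ≤ d)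
    (z : K.chains M d) (hz : K.bdry M d z = 0) (hsupp : z ∈ K.suppIn M (· ⊆ G) d) :
    ∃ w : K.chains M (d+1), w ∈ K.suppIn M (· ⊆ G) (d+1) ∧
      K.chainsCongr M (show d+1-1 = d by ring) (K.bdry M (d+1) w) = z := by
  rcases Finset.eq_empty_or_nonempty G with rfl | ⟨v, hv⟩
  · have hz0 : z = 0 := by
      refine Finsupp.support_eq_empty.mp (Finset.eq_empty_iff_forall_notMem.mpr ?_)
      intro s hs
      have h2 : s.1 = ∅ := Finset.subset_empty.mp (hsupp s hs)
      have h3 := s.2.2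
      rw [h2] at h3
      simp at h3
      omega
    exact ⟨0, Submodule.zero_mem _, by rw [map_zero, map_zero, hz0]⟩
  · refine ⟨K.cone M v d z, K.cone_mem_suppIn M hv hsupp, ?_⟩
    have := K.homotopy M hG hv z hsupp
    rw [hz, map_zero, map_zero, add_zero] at this
    exact this

lemma bdry_bdry_single (i : ℤ) (s : K.czFaces i) (m : M) :
    K.bdry M (i-1) (K.bdry M i (Finsupp.single s m)) = 0 := by
  classical
  rw [K.bdry_single, map_sum]
  have hterm : ∀ a : {x // x ∈ (s.1 : Finset V)},
      K.bdry M (i-1) (((-1:ℤ)^(indl s.1 a.1)) • Finsupp.single (K.eface i s a.1 a.2) m)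
        = ∑ b ∈ s.1, (fun p : V × V =>
            if h : p.1 ∈ s.1 ∧ p.2 ∈ s.1.erase p.1 then
              ((-1:ℤ)^(indl s.1 p.1) * (-1:ℤ)^(indl (s.1.erase p.1) p.2)) •
                Finsupp.single (K.eface (i-1) (K.eface i s p.1 h.1) p.2 h.2) m
            else 0) (a.1, b) := by
    intro a
    rw [map_smul, K.bdry_single]
    rw [Finset.smul_sum]
    have e1 : ∀ b : {x // x ∈ s.1.erase a.1},
        ((-1:ℤ)^(indl s.1 a.1)) • (((-1:ℤ)^(indl (s.1.erase a.1) b.1)) •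
          Finsupp.single (K.eface (i-1) (K.eface i s a.1 a.2) b.1 b.2) m)
        = (fun p : V × V =>
            if h : p.1 ∈ s.1 ∧ p.2 ∈ s.1.erase p.1 then
              ((-1:ℤ)^(indl s.1 p.1) * (-1:ℤ)^(indl (s.1.erase p.1) p.2)) •
                Finsupp.single (K.eface (i-1) (K.eface i s p.1 h.1) p.2 h.2) m
            else 0) (a.1, b.1) := by
      intro b
      dsimp only
      rw [dif_pos ⟨a.2, b.2⟩, smul_smul]
    simp only [eface_coe]
    rw [Finset.sum_congr rfl (fun b _ => e1 b)]
    rw [Finset.sum_attach (s.1.erase a.1) (fun b => (fun p : V × V =>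
            if h : p.1 ∈ s.1 ∧ p.2 ∈ s.1.erase p.1 then
              ((-1:ℤ)^(indl s.1 p.1) * (-1:ℤ)^(indl (s.1.erase p.1) p.2)) •
                Finsupp.single (K.eface (i-1) (K.eface i s p.1 h.1) p.2 h.2) m
            else 0) (a.1, b))]
    refine Finset.sum_subset (Finset.erase_subset a.1 s.1) fun b hb hnb => ?_
    exact dif_neg (fun h => hnb h.2)
  rw [Finset.sum_congr rfl (fun a _ => hterm a)]
  rw [Finset.sum_attach (s.1 : Finset V) (fun a => ∑ b ∈ s.1, (fun p : V × V =>
            if h : p.1 ∈ s.1 ∧ p.2 ∈ s.1.erase p.1 then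
              ((-1:ℤ)^(indl s.1 p.1) * (-1:ℤ)^(indl (s.1.erase p.1) p.2)) •
                Finsupp.single (K.eface (i-1) (K.eface i s p.1 h.1) p.2 h.2) m
            else 0) (a, b))]
  rw [← Finset.sum_product' (s.1 : Finset V) (s.1 : Finset V)]
  refine Finset.sum_involution (fun p _ => Prod.swap p) ?_ ?_ (fun p hp => ?_) (fun p hp => rfl)
  · intro p hp
    dsimp only [Prod.fst_swap, Prod.snd_swap]
    by_cases h : p.1 ∈ s.1 ∧ p.2 ∈ s.1.erase p.1
    · have hp2 : p.2 ∈ s.1 := Finset.mem_of_mem_erase h.2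
      have hne : p.2 ≠ p.1 := (Finset.mem_erase.mp h.2).1
      have h' : p.2 ∈ s.1 ∧ p.1 ∈ s.1.erase p.2 :=
        ⟨hp2, Finset.mem_erase.mpr ⟨hne.symm, h.1⟩⟩
      rw [dif_pos h, dif_pos h']
      have hface : (K.eface (i-1) (K.eface i s p.1 h.1) p.2 h.2).1
          = (K.eface (i-1) (K.eface i s p.2 h'.1) p.1 h'.2).1 := by
        show (s.1.erase p.1).erase p.2 = (s.1.erase p.2).erase p.1
        exact Finset.erase_right_comm
      rw [K.single_congr M hface m, ← add_smul,
        sign_bdry h.1 hp2 (fun hh => hne hh.symm), zero_smul]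
    · have h' : ¬ (p.2 ∈ s.1 ∧ p.1 ∈ s.1.erase p.2) := by
        intro hc
        exact h ⟨Finset.mem_of_mem_erase hc.2, Finset.mem_erase.mpr
          ⟨(Finset.mem_erase.mp hc.2).1.symm, hc.1⟩⟩
      rw [dif_neg h, dif_neg h', add_zero]
  · intro p hp hne
    dsimp only at hne ⊢
    by_cases h : p.1 ∈ s.1 ∧ p.2 ∈ s.1.erase p.1
    · intro hc
      have : p.2 = p.1 := congrArg Prod.fst hc
      exact (Finset.mem_erase.mp h.2).1 this
    · exact absurd (dif_neg h) hne
  · exact Finset.mem_product.mpr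
      ⟨(Finset.mem_product.mp hp).2, (Finset.mem_product.mp hp).1⟩

lemma bdry_bdry (i : ℤ) (z : K.chains M i) :
    K.bdry M (i-1) (K.bdry M i z) = 0 := by
  conv_lhs => rw [← Finsupp.sum_single z]
  rw [Finsupp.sum, map_sum, map_sum]
  refine Finset.sum_eq_zero fun s hs => ?_
  exact K.bdry_bdry_single M i s (z s)

lemma suppIn_mono {P Q : Finset V → Prop} (h : ∀ t, P t → Q t) {i : ℤ}
    {z : K.chains M i} (hz : z ∈ K.suppIn M P i) : z ∈ K.suppIn M Q i :=
  fun s hs => h s.1 (hz s hs)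

lemma main_lemma : ∀ (μ : ℕ) (G : Fin μ → Finset V), (∀ j, G j ∈ K.faces) →
    ∀ {d : ℤ}, (μ ≠ 0 → (μ : ℤ) ≤ d + 1) →
    ∀ (z : K.chains M d), K.bdry M d z = 0 →
    z ∈ K.suppIn M (fun t => ∃ j, t ⊆ G j) d →
    ∃ w : K.chains M (d+1), w ∈ K.suppIn M (fun t => ∃ j, t ⊆ G j) (d+1) ∧
      K.chainsCongr M (show d+1-1 = d by ring) (K.bdry M (d+1) w) = z := by
  intro μ
  induction μ with
  | zero =>
    intro G hG d hd z hz hsupp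
    have hz0 : z = 0 := by
      refine Finsupp.support_eq_empty.mp (Finset.eq_empty_iff_forall_notMem.mpr ?_)
      intro s hs
      obtain ⟨j, -⟩ := hsupp s hs
      exact j.elim0
    exact ⟨0, Submodule.zero_mem _, by rw [map_zero, map_zero, hz0]⟩
  | succ μ ih =>
    intro G hG d hd z hz hsupp
    classical
    have hd' : (μ : ℤ) + 1 ≤ d + 1 := by
      have := hd (Nat.succ_ne_zero μ)
      push_cast at this ⊢
      omega
    have hd0 : (0:ℤ) ≤ d := by omega
    set p : K.czFaces d → Prop := fun s => ∃ j : Fin μ, s.1 ⊆ G j.castSucc with hp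
    set a : K.chains M d := z.filter p with ha
    set b : K.chains M d := z - a with hb
    have hab : a + b = z := by rw [hb]; abel
    have ha_supp : a ∈ K.suppIn M (fun t => ∃ j : Fin μ, t ⊆ G j.castSucc) d := by
      intro s hs
      rw [ha, Finsupp.support_filter, Finset.mem_filter] at hs
      exact hs.2
    have hb_supp : b ∈ K.suppIn M (fun t => t ⊆ G (Fin.last μ)) d := by
      intro s hs
      have hbs : b s ≠ 0 := Finsupp.mem_support_iff.mp hs
      have hnp : ¬ p s := by
        intro hps
        apply hbs
        rw [hb, Finsupp.sub_apply, ha, Finsupp.filter_apply_pos _ _ hps, sub_self]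
      have hzs : s ∈ z.support := by
        by_contra hc
        apply hbs
        have h0 : z s = 0 := Finsupp.notMem_support_iff.mp hc
        rw [hb, Finsupp.sub_apply, h0, ha, Finsupp.filter_apply, if_neg hnp, sub_self]
      obtain ⟨j, hj⟩ := hsupp s hzs
      rcases Fin.eq_castSucc_or_eq_last j with ⟨j', rfl⟩ | rfl
      · exact absurd ⟨j', hj⟩ hnp
      · exact hj
    -- the connecting cycle
    have hsum : K.bdry M d a + K.bdry M d b = 0 := by
      rw [← map_add, hab, hz]
    have hy_cycle : K.bdry M (d-1) (K.bdry M d b) = 0 := K.bdry_bdry M d b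
    have hy_supp : K.bdry M d b ∈
        K.suppIn M (fun t => ∃ j : Fin μ, t ⊆ G j.castSucc ∩ G (Fin.last μ)) (d-1) := by
      have h1 : K.bdry M d b ∈ K.suppIn M (fun t => t ⊆ G (Fin.last μ)) (d-1) :=
        K.bdry_mem_suppIn M (fun t u ht hu => hu.trans ht) hb_supp
      have h2 : K.bdry M d b ∈
          K.suppIn M (fun t => ∃ j : Fin μ, t ⊆ G j.castSucc) (d-1) := by
        have hneg : K.bdry M d b = -(K.bdry M d a) := by
          rw [eq_neg_iff_add_eq_zero, add_comm]; exact hsum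
        rw [hneg]
        refine Submodule.neg_mem _ ?_
        exact K.bdry_mem_suppIn M
          (fun t u ht hu => ht.elim fun j hj => ⟨j, hu.trans hj⟩) ha_supp
      intro s hs
      obtain ⟨j, hj⟩ := h2 s hs
      exact ⟨j, Finset.subset_inter hj (h1 s hs)⟩
    obtain ⟨c', hc'_supp, hc'_eq⟩ := ih (fun j => G j.castSucc ∩ G (Fin.last μ))
      (fun j => K.down_closed (hG j.castSucc) Finset.inter_subset_left)
      (fun hμ => by push_cast; omega)
      (K.bdry M d b) hy_cycle hy_supp
    set c : K.chains M d := K.chainsCongr M (show d-1+1 = d by ring) c' with hc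
    have hc_bdry : K.bdry M d c = K.bdry M d b := by
      rw [hc, K.bdry_chainsCongr]
      exact hc'_eq
    have hc_supp : c ∈
        K.suppIn M (fun t => ∃ j : Fin μ, t ⊆ G j.castSucc ∩ G (Fin.last μ)) d :=
      K.chainsCongr_mem_suppIn M _ hc'_supp
    -- the piece in the first μ simplices
    have ha'_cycle : K.bdry M d (a + c) = 0 := by
      rw [map_add, hc_bdry]; exact hsum
    have ha'_supp : (a + c) ∈ K.suppIn M (fun t => ∃ j : Fin μ, t ⊆ G j.castSucc) d := by
      refine Submodule.add_mem _ ha_supp ?_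
      exact K.suppIn_mono M
        (fun t ht => ht.elim fun j hj => ⟨j, hj.trans Finset.inter_subset_left⟩) hc_supp
    obtain ⟨u, hu_supp, hu_eq⟩ := ih (fun j => G j.castSucc)
      (fun j => hG j.castSucc) (fun hμ => by omega) (a + c) ha'_cycle ha'_supp
    -- the piece in the last simplex
    have hb'_cycle : K.bdry M d (b - c) = 0 := by
      rw [map_sub, hc_bdry, sub_self]
    have hb'_supp : (b - c) ∈ K.suppIn M (fun t => t ⊆ G (Fin.last μ)) d := by
      refine Submodule.sub_mem _ hb_supp ?_
      exact K.suppIn_mono M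
        (fun t ht => ht.elim fun j hj => hj.trans Finset.inter_subset_right) hc_supp
    obtain ⟨w', hw'_supp, hw'_eq⟩ := K.cone_acyclic M (hG (Fin.last μ)) hd0
      (b - c) hb'_cycle hb'_supp
    refine ⟨u + w', ?_, ?_⟩
    · refine Submodule.add_mem _ ?_ ?_
      · exact K.suppIn_mono M (fun t ht => ht.elim fun j hj => ⟨j.castSucc, hj⟩) hu_supp
      · exact K.suppIn_mono M (fun t ht => ⟨Fin.last μ, ht⟩) hw'_supp
    · rw [map_add, map_add, hu_eq, hw'_eq]
      rw [← hab]; abel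

end SComplex

lemma exists_facet {V : Type} [Fintype V] [DecidableEq V] (K : SComplex V)
    {s : Finset V} (hs : s ∈ K.faces) :
    ∃ t ∈ SComplex.facets K, s ⊆ t := by
  classical
  have hfin : {t : Finset V | t ∈ K.faces ∧ s ⊆ t}.Finite := Set.toFinite _
  obtain ⟨t, ⟨htf, hst⟩, hmax⟩ :=
    hfin.exists_maximalFor (fun t : Finset V => t.card) _ ⟨s, hs, subset_rfl⟩
  refine ⟨t, ⟨htf, fun u hu htu => ?_⟩, hst⟩
  exact Finset.eq_of_subset_of_card_le htu
    (hmax ⟨hu, hst.trans htu⟩ (Finset.card_le_card htu))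

lemma SComplex.vanishing {V : Type} [LinearOrder V] [Fintype V] (K : SComplex V)
    (M : Type) [AddCommGroup M] {d : ℤ}
    (hd : (SComplex.facets K).ncard ≠ 0 → ((SComplex.facets K).ncard : ℤ) ≤ d + 1) :
    Subsingleton (K.redHomology M d) := by
  classical
  refine (Submodule.Quotient.subsingleton_iff).mpr ?_
  rw [Submodule.eq_top_iff']
  intro x
  rw [Submodule.mem_comap]
  have hfin : (SComplex.facets K).Finite := Set.toFinite _
  set F : Finset (Finset V) := hfin.toFinset with hF
  have hcard : F.card = (SComplex.facets K).ncard :=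
    (Set.ncard_eq_toFinset_card _ hfin).symm
  set G : Fin F.card → Finset V := fun i => (F.equivFin.symm i).1 with hG
  have hGfaces : ∀ j, G j ∈ K.faces := fun j =>
    ((Set.Finite.mem_toFinset hfin).mp (F.equivFin.symm j).2).1
  have hcover : ∀ s : Finset V, s ∈ K.faces → ∃ j : Fin F.card, s ⊆ G j := by
    intro s hs
    obtain ⟨t, ht, hst⟩ := exists_facet K hs
    have htF : t ∈ F := (Set.Finite.mem_toFinset hfin).mpr ht
    refine ⟨F.equivFin ⟨t, htF⟩, ?_⟩
    rw [hG]
    simp only [Equiv.symm_apply_apply]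
    exact hst
  have hx := x.2
  rw [LinearMap.mem_ker] at hx
  obtain ⟨w, hw_supp, hw_eq⟩ := K.main_lemma M F.card G hGfaces
    (fun hne => by rw [hcard]; exact hd (fun h0 => hne (by omega))) x.1 hx
    (fun s _ => hcover s.1 s.2.1)
  rw [Submodule.mem_map]
  exact ⟨K.bdry M (d+1) w, LinearMap.mem_range_self _ _, hw_eq⟩

/-- A simplicial complex on `n` vertices with at most `n - 3` facets has vanishing reduced
homology with field coefficients in degrees `n - 3` and `n - 4`. -/
theorem stmt12 {n : ℕ} (K : SComplex (Fin n))
    (h : (SComplex.facets K).ncard ≤ n - 3) (k : Type) [Field k] :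
    Subsingleton (K.redHomology k ((n : ℤ) - 3)) ∧
      Subsingleton (K.redHomology k ((n : ℤ) - 4)) := by
  constructor
  · refine SComplex.vanishing K k ?_
    intro hne
    have h4 : (SComplex.facets K).ncard + 3 ≤ n := by omega
    have h5 : ((SComplex.facets K).ncard : ℤ) + 3 ≤ (n:ℤ) := by exact_mod_cast h4
    omega
  · refine SComplex.vanishing K k ?_
    intro hne
    have h4 : (SComplex.facets K).ncard + 3 ≤ n := by omega
    have h5 : ((SComplex.facets K).ncard : ℤ) + 3 ≤ (n:ℤ) := by exact_mod_cast h4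
    omega
end
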